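/- For any d ∈ ℕ, setting t = 2d⁴, for any finite list W₁,…,W_N of d×d complex matrices there exist V₁,…,V_t ∈ M_d(ℂ), each a nonnegative real multiple of some W_i, such that ∑_{i=1}^N W_i* M W_i = ∑_{i=1}^t V_i* M V_i for all M ∈ M_d(ℂ). -/

import Mathlib

open Matrix

open Module
lemma cone_caratheodory {E : Type*} [AddCommGroup E] [Module ℝ E] [FiniteDimensional ℝ E]
    {ι : Type*} [DecidableEq ι] (v : ι → E) :
    ∀ s : Finset ι, ∀ c : ι → ℝ, (∀ i ∈ s, 0 ≤ c i) →
    ∃ s' : Finset ι, s' ⊆ s ∧ s'.card ≤ finrank ℝ E ∧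
      ∃ c' : ι → ℝ, (∀ i, 0 ≤ c' i) ∧ ∑ i ∈ s, c i • v i = ∑ i ∈ s', c' i • v i := by
  classical
  intro s
  induction s using Finset.strongInduction with
  | _ s ih =>
    intro c hc
    by_cases hcard : s.card ≤ finrank ℝ E
    · refine ⟨s, subset_rfl, hcard, fun i => if i ∈ s then c i else 0, ?_, ?_⟩
      · intro i
        dsimp only
        split
        · exact hc i ‹_›
        · exact le_rfl
      · refine Finset.sum_congr rfl fun i hi => ?_
        simp [hi]
    · push_neg at hcard
      have hdep : ¬ LinearIndependent ℝ (fun i : s => v i) := by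
        intro h
        have := h.fintype_card_le_finrank
        rw [Fintype.card_coe] at this
        omega
      obtain ⟨g, hgsum, i₁, hi₁⟩ := Fintype.not_linearIndependent_iff.mp hdep
      set G : ι → ℝ := fun i => if h : i ∈ s then g ⟨i, h⟩ else 0 with hG
      have hGsum : ∑ i ∈ s, G i • v i = 0 := by
        rw [← Finset.sum_attach s (fun i => G i • v i)]
        simpa [hG] using hgsum
      obtain ⟨G, hGsum, i₂, hi₂s, hi₂⟩ :
          ∃ G : ι → ℝ, ∑ i ∈ s, G i • v i = 0 ∧ ∃ i ∈ s, 0 < G i := by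
        rcases lt_trichotomy (G i₁) 0 with h | h | h
        · refine ⟨fun i => -G i, ?_, i₁, i₁.2, by simpa using h⟩
          simp only [neg_smul]
          rw [Finset.sum_neg_distrib, hGsum, neg_zero]
        · exact absurd (by simpa [hG, Finset.coe_mem] using h) hi₁
        · exact ⟨G, hGsum, i₁, i₁.2, h⟩
      have hP : (s.filter fun i => 0 < G i).Nonempty := ⟨i₂, Finset.mem_filter.mpr ⟨hi₂s, hi₂⟩⟩
      obtain ⟨i₀, hi₀P, hmin⟩ := Finset.exists_min_image _ (fun i => c i / G i) hP
      rw [Finset.mem_filter] at hi₀P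
      obtain ⟨hi₀s, hi₀pos⟩ := hi₀P
      set α := c i₀ / G i₀ with hα
      have hα0 : 0 ≤ α := div_nonneg (hc i₀ hi₀s) hi₀pos.le
      set c₂ : ι → ℝ := fun i => c i - α * G i with hc₂
      have hc₂nn : ∀ i ∈ s, 0 ≤ c₂ i := by
        intro i hi
        rcases le_or_gt (G i) 0 with h | h
        · have h1 : α * G i ≤ 0 := mul_nonpos_of_nonneg_of_nonpos hα0 h
          have h2 := hc i hi
          simp only [hc₂]; linarith
        · have h3 := hmin i (Finset.mem_filter.mpr ⟨hi, h⟩)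
          rw [le_div_iff₀ h] at h3
          simp only [hc₂]; linarith
      have hc₂i₀ : c₂ i₀ = 0 := by
        simp only [hc₂, hα]
        field_simp
        simp
      have hsum2 : ∑ i ∈ s, c i • v i = ∑ i ∈ s.erase i₀, c₂ i • v i := by
        have h1 : ∑ i ∈ s, c₂ i • v i = ∑ i ∈ s, c i • v i - α • ∑ i ∈ s, G i • v i := by
          rw [Finset.smul_sum, ← Finset.sum_sub_distrib]
          refine Finset.sum_congr rfl fun i hi => ?_
          simp [hc₂, sub_smul, smul_smul]
        rw [hGsum, smul_zero, sub_zero] at h1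
        rw [← h1]
        exact (Finset.sum_erase _ (by rw [hc₂i₀, zero_smul])).symm
      obtain ⟨s', hs'sub, hs'card, c', hc'nn, hc'sum⟩ :=
        ih (s.erase i₀) (Finset.erase_ssubset hi₀s) c₂
          (fun i hi => hc₂nn i (Finset.mem_of_mem_erase hi))
      exact ⟨s', hs'sub.trans (Finset.erase_subset _ _), hs'card, c', hc'nn, hsum2.trans hc'sum⟩

noncomputable def conjMap {d : ℕ} (W : Matrix (Fin d) (Fin d) ℂ) :
    Matrix (Fin d) (Fin d) ℂ →ₗ[ℂ] Matrix (Fin d) (Fin d) ℂ where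
  toFun M := Wᴴ * M * W
  map_add' M N := by simp [Matrix.mul_add, Matrix.add_mul]
  map_smul' r M := by simp [Matrix.mul_smul, Matrix.smul_mul]

lemma conjMap_smul {d : ℕ} (r : ℝ) (W : Matrix (Fin d) (Fin d) ℂ) :
    conjMap ((r : ℂ) • W) = (r * r) • conjMap W := by
  ext M
  simp [conjMap, Matrix.smul_mul, Matrix.mul_smul, smul_smul, Complex.ofReal_mul,
    conjTranspose_smul, Complex.star_def, Complex.conj_ofReal]

lemma conjMap_zero {d : ℕ} : conjMap (0 : Matrix (Fin d) (Fin d) ℂ) = 0 := by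
  ext M
  simp [conjMap]

/-- Carathéodory-type bound: for any `d` and any matrices `W₁,…,W_N ∈ M_d(ℂ)`
(`N ≥ 1`), there are `t = 2d⁴` matrices `V₁,…,V_t`, each a nonnegative real multiple of some
`W_i`, with `∑ Wᵢᴴ M Wᵢ = ∑ Vᵢᴴ M Vᵢ` for all `M`. -/
theorem caratheodory_conjugation_bound
    (d N : ℕ) (hN : 0 < N) (W : Fin N → Matrix (Fin d) (Fin d) ℂ) :
    ∃ V : Fin (2 * d ^ 4) → Matrix (Fin d) (Fin d) ℂ,
      (∀ i, ∃ c : ℝ, 0 ≤ c ∧ ∃ j, V i = (c : ℂ) • W j) ∧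
      (∀ M : Matrix (Fin d) (Fin d) ℂ,
        ∑ i, (W i)ᴴ * M * W i = ∑ i, (V i)ᴴ * M * V i) := by
  classical
  have hfr : finrank ℝ (Matrix (Fin d) (Fin d) ℂ →ₗ[ℂ] Matrix (Fin d) (Fin d) ℂ) = 2 * d ^ 4 := by
    rw [← Module.finrank_mul_finrank ℝ ℂ, Complex.finrank_real_complex,
      Module.finrank_linearMap, Module.finrank_matrix]
    simp [Fintype.card_fin]
    ring
  obtain ⟨s', hsub, hcard, c', hc'nn, hsum⟩ :=
    cone_caratheodory (fun i : Fin N => conjMap (W i)) Finset.univ (fun _ => 1)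
      (fun _ _ => zero_le_one)
  rw [hfr] at hcard
  set m := s'.card with hm
  set e : Fin m ≃ {x // x ∈ s'} := s'.equivFin.symm with he
  set idx : Fin m → Fin N := fun k => (e k : Fin N) with hidx
  set V : Fin (2 * d ^ 4) → Matrix (Fin d) (Fin d) ℂ := fun k =>
    if h : (k : ℕ) < m then ((Real.sqrt (c' (idx ⟨k, h⟩)) : ℝ) : ℂ) • W (idx ⟨k, h⟩) else 0
    with hV
  refine ⟨V, ?_, ?_⟩
  · intro k
    by_cases h : (k : ℕ) < m
    · exact ⟨Real.sqrt (c' (idx ⟨k, h⟩)), Real.sqrt_nonneg _, idx ⟨k, h⟩, by simp [hV, h]⟩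
    · exact ⟨0, le_rfl, ⟨0, hN⟩, by simp [hV, h]⟩
  · intro M
    have key : ∑ i, conjMap (W i) = ∑ k, conjMap (V k) := by
      have h1 : ∑ i, conjMap (W i) = ∑ i ∈ s', c' i • conjMap (W i) := by
        simpa using hsum
      have h2 : ∑ k, conjMap (V k) = ∑ k : Fin m, conjMap (V (Fin.castLEEmb hcard k)) := by
        rw [← Finset.sum_map Finset.univ (Fin.castLEEmb hcard) (fun k => conjMap (V k))]
        refine (Finset.sum_subset (Finset.subset_univ _) fun k _ hk => ?_).symm
        have hkm : ¬ ((k : ℕ) < m) := by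
          intro h
          exact hk (Finset.mem_map.mpr ⟨⟨(k : ℕ), h⟩, Finset.mem_univ _, by
            simp [Fin.castLEEmb, Fin.castLE]⟩)
        simp [hV, hkm, conjMap_zero]
      have h3 : ∀ k : Fin m, conjMap (V (Fin.castLEEmb hcard k))
          = c' (idx k) • conjMap (W (idx k)) := by
        intro k
        have hk : ((Fin.castLEEmb hcard k : Fin (2 * d ^ 4)) : ℕ) < m := k.2
        have hkk : (⟨((Fin.castLEEmb hcard k : Fin (2 * d ^ 4)) : ℕ), hk⟩ : Fin m) = k := by
          ext; simp [Fin.castLE]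
        simp only [hV, dif_pos hk, hkk]
        rw [conjMap_smul, Real.mul_self_sqrt (hc'nn _)]
      have h4 : ∑ k : Fin m, c' (idx k) • conjMap (W (idx k))
          = ∑ i ∈ s', c' i • conjMap (W i) := by
        rw [← Finset.sum_attach s' (fun i => c' i • conjMap (W i))]
        exact Equiv.sum_comp e (fun x : {x // x ∈ s'} => c' (x : Fin N) • conjMap (W (x : Fin N)))
      rw [h1, h2, ← h4]
      exact (Finset.sum_congr rfl fun k _ => h3 k).symm
    have := congrArg (fun L : Matrix (Fin d) (Fin d) ℂ →ₗ[ℂ] Matrix (Fin d) (Fin d) ℂ => L M) key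
    simpa [conjMap, LinearMap.sum_apply] using this
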